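/- Let G be a finite abelian group of order n, not an elementary abelian 2-group, L = {x : 2x = 0}, and let h be an integer with (n + |L|)/2 − 1 ≤ h ≤ n − 2. Then every subset A of G with |A| = h + 2 satisfies h∧A = G, while no subset of size h + 1 does; i.e., the restricted h-critical number of G equals h + 2. -/

import Mathlib

/-- The `h`-fold restricted sumset of a finite set `A`: all sums of `h`
pairwise distinct elements of `A`. -/
def restSumset {G : Type*} [AddCommMonoid G] [DecidableEq G] (h : ℕ) (A : Finset G) :
    Finset G :=
  (A.powersetCard h).image fun s => s.sum id

theorem stmt7 {G : Type*} [AddCommGroup G] [Fintype G] [DecidableEq G]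
    (hG : ¬ ∀ x : G, x + x = 0) (h : ℕ)
    (h1 : (Fintype.card G + (Finset.univ.filter fun x : G => x + x = 0).card) / 2 - 1 ≤ h)
    (h2 : h ≤ Fintype.card G - 2) :
    (∀ A : Finset G, A.card = h + 2 → restSumset h A = Finset.univ) ∧
    (∀ A : Finset G, A.card = h + 1 → restSumset h A ≠ Finset.univ) := by
  classical
  push_neg at hG
  obtain ⟨x₀, hx₀⟩ := hG
  have hx0 : x₀ ≠ 0 := by
    intro hh; rw [hh] at hx₀; simp at hx₀
  have hnt : Nontrivial G := ⟨x₀, 0, hx0⟩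
  have hn2 : 2 ≤ Fintype.card G := Fintype.one_lt_card
  constructor
  · intro A hA
    -- key: for any target t, there exist distinct a b ∈ A with a + b = t
    have key : ∀ t : G, ∃ a b, a ∈ A ∧ b ∈ A ∧ a ≠ b ∧ a + b = t := by
      intro t
      set C : Finset G := A.image (fun a => t - a) with hC
      set S : Finset G := Finset.univ.filter (fun a : G => a + a = t) with hS
      have hCcard : C.card = A.card := by
        rw [hC]
        apply Finset.card_image_of_injective
        intro x y hxy
        simpa using hxy
      have hScard : S.card ≤ (Finset.univ.filter fun x : G => x + x = 0).card := by
        rcases S.eq_empty_or_nonempty with he | ⟨a₀, ha₀⟩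
        · simp [he]
        · have ha₀' : a₀ + a₀ = t := by
            rw [hS] at ha₀; exact (Finset.mem_filter.mp ha₀).2
          apply Finset.card_le_card_of_injOn (fun a => a - a₀)
          · intro a ha
            have ha' : a + a = t := (Finset.mem_filter.mp ha).2
            simp only [Finset.mem_coe, Finset.mem_filter, Finset.mem_univ, true_and]
            rw [sub_add_sub_comm, ha', ha₀', sub_self]
          · intro x _ y _ hxy
            exact sub_left_injective hxy
      have hunion : A.card + C.card = (A ∪ C).card + (A ∩ C).card :=
        (Finset.card_union_add_card_inter A C).symm
      have hun : (A ∪ C).card ≤ Fintype.card G := Finset.card_le_univ _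
      have hsd : (A ∩ C).card ≤ ((A ∩ C) \ S).card + S.card :=
        Finset.card_le_card_sdiff_add_card
      have hpos : 0 < ((A ∩ C) \ S).card := by omega
      obtain ⟨a, ha⟩ := Finset.card_pos.mp hpos
      obtain ⟨haAC, haS⟩ := Finset.mem_sdiff.mp ha
      have haA : a ∈ A := (Finset.mem_inter.mp haAC).1
      have haC : a ∈ C := (Finset.mem_inter.mp haAC).2
      obtain ⟨b, hbA, hb⟩ := Finset.mem_image.mp haC
      have hbA' : t - a ∈ A := by
        have : b = t - a := by rw [← hb]; abel
        rwa [← this]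
      refine ⟨a, t - a, haA, hbA', ?_, by abel⟩
      intro heq
      apply haS
      rw [hS]
      simp only [Finset.mem_filter, Finset.mem_univ, true_and]
      have : a + a = a + (t - a) := by rw [← heq]
      rw [this]; abel
    apply Finset.eq_univ_of_forall
    intro g
    obtain ⟨a, b, haA, hbA, hab, hs⟩ := key (A.sum id - g)
    have hsub : {a, b} ⊆ A := by
      intro x hx
      rcases Finset.mem_insert.mp hx with h' | h'
      · rwa [h']
      · rw [Finset.mem_singleton.mp h']; exact hbA
    have hcard2 : ({a, b} : Finset G).card = 2 := Finset.card_pair hab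
    have hcards : (A \ {a, b}).card = h := by
      rw [Finset.card_sdiff_of_subset hsub, hcard2, hA]
      omega
    have hsum : (A \ {a, b}).sum id = g := by
      have := Finset.sum_sdiff (f := id) hsub
      have hpair : ({a, b} : Finset G).sum id = a + b := by
        rw [Finset.sum_pair hab]; rfl
      rw [hpair, hs] at this
      have h' : (A \ {a, b}).sum id = A.sum id - (A.sum id - g) :=
        eq_sub_of_add_eq this
      rw [h', sub_sub_cancel]
    rw [restSumset]
    apply Finset.mem_image.mpr
    exact ⟨A \ {a, b}, Finset.mem_powersetCard.mpr ⟨Finset.sdiff_subset, hcards⟩, hsum⟩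
  · intro A hA hcontra
    have hle : (restSumset h A).card ≤ h + 1 := by
      calc (restSumset h A).card ≤ (A.powersetCard h).card := Finset.card_image_le
        _ = (h + 1).choose h := by rw [Finset.card_powersetCard, hA]
        _ = h + 1 := Nat.choose_succ_self_right h
    rw [hcontra, Finset.card_univ] at hle
    omega
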